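/- For every connected simple graph G on n vertices, the Wiener index W(G) (the sum of distances over all unordered pairs of distinct vertices) satisfies W(G) ≤ (n-1)n(n+1)/6. -/

import Mathlib

open Finset SimpleGraph

namespace WienerAux

variable {V : Type*} {G : SimpleGraph V}

lemma length_drop {u v : V} (p : G.Walk u v) (n : ℕ) :
    (p.drop n).length = p.length - n := by
  induction p generalizing n with
  | nil => simp [SimpleGraph.Walk.drop]
  | cons h q ih =>
    cases n with
    | zero => simp [SimpleGraph.Walk.drop]
    | succ n => simpa [SimpleGraph.Walk.drop] using ih n

lemma dist_getVert {u v : V} (p : G.Walk u v) (hp : p.length = G.dist u v)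
    {k : ℕ} (hk : k ≤ p.length) : G.dist u (p.getVert k) = k := by
  have he : p.reverse.getVert (p.length - k) = p.getVert k := by
    rw [SimpleGraph.Walk.getVert_reverse]
    congr 1
    omega
  let q1 : G.Walk u (p.getVert k) :=
    ((p.reverse.drop (p.length - k)).reverse).copy rfl he
  have hq1 : q1.length = k := by
    simp [q1, length_drop]
    omega
  have h2 : G.dist u (p.getVert k) ≤ k := by
    have := SimpleGraph.dist_le q1
    omega
  have h3 : k ≤ G.dist u (p.getVert k) := by
    obtain ⟨r, hr⟩ := (SimpleGraph.Walk.reachable q1).exists_walk_length_eq_dist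
    have := SimpleGraph.dist_le (r.append (p.drop k))
    rw [SimpleGraph.Walk.length_append, length_drop, hr] at this
    omega
  omega

lemma dist_le_card_lt [Fintype V] [DecidableEq V] (hG : G.Connected) (v u : V) :
    G.dist v u ≤ (univ.filter fun w => G.dist v w < G.dist v u).card := by
  classical
  obtain ⟨p, hp⟩ := hG.exists_walk_length_eq_dist v u
  have := Finset.card_le_card_of_injOn (f := fun k => p.getVert k)
    (s := Finset.range (G.dist v u))
    (t := univ.filter fun w => G.dist v w < G.dist v u)
    (fun k hk => by
      simp only [Finset.coe_range, Set.mem_Iio] at hk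
      simp only [Finset.mem_coe, Finset.mem_filter, Finset.mem_univ, true_and]
      rw [dist_getVert p hp (by omega)]
      exact hk)
    (fun k hk l hl hkl => by
      simp only [Finset.coe_range, Set.mem_Iio] at hk hl
      have h1 := dist_getVert p hp (k := k) (by omega)
      have h2 := dist_getVert p hp (k := l) (by omega)
      simp only [] at hkl
      rw [hkl] at h1
      omega)
  simpa using this

lemma two_mul_sum_dist_le [Fintype V] (hG : G.Connected) (v : V) :
    2 * (∑ u : V, G.dist v u) + Fintype.card V ≤ Fintype.card V * Fintype.card V := by
  classical
  set f : V → ℕ := fun u => G.dist v u with hf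
  have h1 : ∑ u : V, f u ≤ ∑ u : V, (univ.filter fun w => f w < f u).card :=
    Finset.sum_le_sum fun u _ => dist_le_card_lt hG v u
  have hsymm : ∑ u : V, (univ.filter fun w => f w < f u).card
      = ∑ u : V, (univ.filter fun w => f u < f w).card := by
    simp only [Finset.card_filter]
    rw [Finset.sum_comm]
  have h2 : ∑ u : V, ((univ.filter fun w => f w < f u).card
        + (univ.filter fun w => f u < f w).card)
      ≤ ∑ u : V, (Fintype.card V - 1) := by
    refine Finset.sum_le_sum fun u _ => ?_
    have hd : Disjoint (univ.filter fun w => f w < f u) (univ.filter fun w => f u < f w) := by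
      simp only [Finset.disjoint_filter]
      intro w _ h1 h2
      omega
    rw [← Finset.card_union_of_disjoint hd]
    have hsub : (univ.filter fun w => f w < f u) ∪ (univ.filter fun w => f u < f w)
        ⊆ univ.erase u := by
      intro w hw
      simp only [Finset.mem_union, Finset.mem_filter, Finset.mem_univ, true_and] at hw
      simp only [Finset.mem_erase, Finset.mem_univ, and_true]
      rintro rfl
      omega
    calc _ ≤ (univ.erase u).card := Finset.card_le_card hsub
    _ = Fintype.card V - 1 := by rw [Finset.card_erase_of_mem (Finset.mem_univ u)]; rfl
  rw [Finset.sum_add_distrib, ← hsymm] at h2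
  have h3 : ∑ _u : V, (Fintype.card V - 1) = Fintype.card V * (Fintype.card V - 1) := by
    simp [mul_comm]
  have hn : 1 ≤ Fintype.card V := Fintype.card_pos_iff.mpr ⟨v⟩
  have := Nat.mul_le_mul_left (Fintype.card V) (Nat.le_refl 1)
  nlinarith [h1, h2, h3, Nat.sub_add_cancel hn,
    Nat.mul_le_mul_left (Fintype.card V) hn]

lemma reachable_induce {s : Set V} :
    ∀ {a b : V} (p : G.Walk a b) (ha : a ∈ s) (hb : b ∈ s),
      (∀ x ∈ p.support, x ∈ s) → (G.induce s).Reachable ⟨a, ha⟩ ⟨b, hb⟩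
  | a, _, SimpleGraph.Walk.nil, ha, hb, _ => Reachable.refl _
  | a, b, @SimpleGraph.Walk.cons _ _ _ c _ h q, ha, hb, hs => by
    have hc : c ∈ s := hs c (by simp)
    have hadj : (G.induce s).Adj ⟨a, ha⟩ ⟨c, hc⟩ := by
      simpa using h
    exact hadj.reachable.trans
      (reachable_induce q hc hb (fun x hx => hs x (by simp [hx])))

universe u

lemma key (n : ℕ) : ∀ {V : Type u} [Fintype V] (G : SimpleGraph V), G.Connected →
    Fintype.card V = n → 3 * (∑ u : V, ∑ w : V, G.dist u w) ≤ (n - 1) * n * (n + 1) := by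
  induction n using Nat.strong_induction_on with
  | _ n ih =>
  intro V _ G hG hcard
  classical
  by_cases hn : n ≤ 1
  · have hall : ∀ u w : V, G.dist u w = 0 := fun u w => by
      have : u = w := Fintype.card_le_one_iff.mp (hcard ▸ hn) u w
      simp [this]
    simp [hall]
  push_neg at hn
  obtain ⟨u₀⟩ := hG.nonempty
  obtain ⟨v, -, hv⟩ := Finset.exists_max_image univ (fun w => G.dist u₀ w) ⟨u₀, mem_univ u₀⟩
  obtain ⟨w₀, hw₀⟩ := Fintype.exists_ne_of_one_lt_card (hcard ▸ hn) u₀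
  have hvpos : 0 < G.dist u₀ v :=
    lt_of_lt_of_le (hG.pos_dist_of_ne (Ne.symm hw₀)) (hv w₀ (mem_univ _))
  have hvu : u₀ ≠ v := by
    rintro rfl
    rw [SimpleGraph.dist_self] at hvpos
    exact Nat.lt_irrefl 0 hvpos
  set s : Set V := {w | w ≠ v} with hsdef
  have hu₀s : u₀ ∈ s := hvu
  have hcard' : Fintype.card s = n - 1 := by
    have e : Fintype.card s = Fintype.card {x : V // ¬ x = v} :=
      Fintype.card_congr (Equiv.subtypeEquivRight (by simp [hsdef]))
    rw [e, Fintype.card_subtype_compl, Fintype.card_subtype_eq, hcard]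
  -- connectivity of the induced graph
  have hreach : ∀ x : s, (G.induce s).Reachable ⟨u₀, hu₀s⟩ x := by
    intro x
    obtain ⟨p, hp⟩ := hG.exists_walk_length_eq_dist u₀ ↑x
    refine reachable_induce p hu₀s x.2 ?_
    intro y hy
    obtain ⟨k, hk, hkl⟩ := SimpleGraph.Walk.mem_support_iff_exists_getVert.mp hy
    have hdy : G.dist u₀ y = k := by rw [← hk]; exact dist_getVert p hp hkl
    show y ∈ s
    simp only [hsdef, Set.mem_setOf_eq]
    intro hyv
    have h1 : G.dist u₀ ↑x ≤ G.dist u₀ v := hv ↑x (mem_univ _)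
    have hdv : G.dist u₀ v = k := hyv ▸ hdy
    have hk2 : k = p.length := by omega
    have hx : (↑x : V) = v := by
      rw [← hyv, ← hk, hk2]
      exact (SimpleGraph.Walk.getVert_length p).symm
    exact x.2 hx
  have hG' : (G.induce s).Connected := by
    rw [connected_iff]
    exact ⟨fun a b => (hreach a).symm.trans (hreach b), ⟨⟨u₀, hu₀s⟩⟩⟩
  -- distances only grow in the induced graph
  have hmono : ∀ a b : s, G.dist ↑a ↑b ≤ (G.induce s).dist a b := by
    intro a b
    obtain ⟨q, hq⟩ := hG'.exists_walk_length_eq_dist a b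
    have := SimpleGraph.dist_le (q.map (SimpleGraph.Embedding.induce s).toHom)
    rwa [SimpleGraph.Walk.length_map, hq] at this
  -- splitting sums over `V` into `v` and the rest
  have split : ∀ f : V → ℕ, ∑ u : V, f u = f v + ∑ a : s, f ↑a := by
    intro f
    have h1 : ∑ x ∈ univ.erase v, f x = ∑ a : s, f ↑a :=
      Finset.sum_subtype (univ.erase v) (by simp [hsdef]) f
    rw [← h1, Finset.add_sum_erase _ f (mem_univ v)]
  have hS : ∑ u : V, ∑ w : V, G.dist u w
      = (∑ a : s, ∑ b : s, G.dist ↑a ↑b) + 2 * ∑ w : V, G.dist v w := by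
    rw [split (fun u => ∑ w : V, G.dist u w)]
    have e1 : ∑ a : s, ∑ w : V, G.dist ↑a w
        = ∑ a : s, (G.dist ↑a v + ∑ b : s, G.dist ↑a ↑b) :=
      Finset.sum_congr rfl (fun a _ => split _)
    rw [e1, Finset.sum_add_distrib]
    have e2 : ∑ a : s, G.dist ↑a v = ∑ a : s, G.dist v ↑a := by
      simp [SimpleGraph.dist_comm]
    have e3 : ∑ w : V, G.dist v w = G.dist v v + ∑ a : s, G.dist v ↑a := split _
    rw [SimpleGraph.dist_self] at e3
    rw [e2]
    omega
  have hIH : 3 * (∑ a : s, ∑ b : s, (G.induce s).dist a b)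
      ≤ (n - 1 - 1) * (n - 1) * (n - 1 + 1) := ih (n - 1) (by omega) (G.induce s) hG' hcard'
  have hmono' : (∑ a : s, ∑ b : s, G.dist ↑a ↑b)
      ≤ ∑ a : s, ∑ b : s, (G.induce s).dist a b :=
    Finset.sum_le_sum fun a _ => Finset.sum_le_sum fun b _ => hmono a b
  have hD : 2 * (∑ w : V, G.dist v w) + n ≤ n * n := by
    have h := two_mul_sum_dist_le hG v
    rw [hcard] at h
    exact h
  obtain ⟨m, rfl⟩ : ∃ m, n = m + 2 := ⟨n - 2, by omega⟩
  have e4 : m + 2 - 1 - 1 = m := by omega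
  have e5 : m + 2 - 1 = m + 1 := by omega
  rw [e4, e5] at hIH
  rw [hS, e5]
  nlinarith [hIH, hmono', hD]

end WienerAux

/-- The Wiener index of a connected graph on `n` vertices is at most
`(n-1)n(n+1)/6`. Stated over `ℚ`: the sum of distances over ordered pairs is
twice the Wiener index. -/
theorem wiener_le_of_connected {V : Type*} [Fintype V]
    (G : SimpleGraph V) (hG : G.Connected) (n : ℕ) (hn : n = Fintype.card V) :
    ((∑ u : V, ∑ v : V, G.dist u v : ℕ) : ℚ) / 2 ≤
      ((n : ℚ) - 1) * n * (n + 1) / 6 := by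
  have hkey := WienerAux.key n G hG hn.symm
  haveI : Nonempty V := hG.nonempty
  have hn1 : 1 ≤ n := by
    rw [hn]
    exact Fintype.card_pos
  have hq : ((3 * (∑ u : V, ∑ v : V, G.dist u v) : ℕ) : ℚ)
      ≤ (((n - 1) * n * (n + 1) : ℕ) : ℚ) := Nat.cast_le.mpr hkey
  push_cast [Nat.cast_sub hn1] at hq
  push_cast
  linarith
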